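/- Let β, ᾱ' ∈ (0,1) be real numbers, set α = 1 − β and ᾱ = α·ᾱ', and let x₀ ∈ ℝ. Then the pushforward of the Gaussian measure gaussianReal (√ᾱ'·x₀) (1−ᾱ') under the map y ↦ √α·y, convolved with gaussianReal 0 β, equals gaussianReal (√ᾱ·x₀) (1−ᾱ). In particular the key schedule identity α·(1−ᾱ') + β = 1 − ᾱ holds, and one step of the forward diffusion kernel maps the Gaussian conditional marginal at the previous timestep to the Gaussian conditional marginal at the current timestep. -/

import Mathlib

open Real MeasureTheory ProbabilityTheory

open scoped NNReal ENNReal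

lemma aux_pdf_bound (μ : ℝ) (v : ℝ≥0) (x : ℝ) :
    ‖gaussianPDFReal μ v x‖ ≤ (Real.sqrt (2 * π * v))⁻¹ := by
  rw [Real.norm_eq_abs, abs_of_nonneg (gaussianPDFReal_nonneg _ _ _), gaussianPDFReal]
  have h1 : rexp (- (x - μ)^2 / (2 * v)) ≤ 1 := by
    rw [Real.exp_le_one_iff]
    apply div_nonpos_of_nonpos_of_nonneg
    · simp [sq_nonneg]
    · positivity
  calc (Real.sqrt (2 * π * v))⁻¹ * rexp (- (x - μ)^2 / (2 * v))
      ≤ (Real.sqrt (2 * π * v))⁻¹ * 1 := by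
        apply mul_le_mul_of_nonneg_left h1 (by positivity)
    _ = _ := mul_one _

lemma aux_real_conv {a b : ℝ} (ha : 0 < a) (hb : 0 < b) (m w : ℝ) :
    ∫ x : ℝ, (Real.sqrt (2 * π * a))⁻¹ * rexp (- (x - m)^2 / (2 * a)) *
        ((Real.sqrt (2 * π * b))⁻¹ * rexp (- (x - w)^2 / (2 * b)))
      = (Real.sqrt (2 * π * (a + b)))⁻¹ * rexp (- (w - m)^2 / (2 * (a + b))) := by
  have hab : 0 < a + b := by linarith
  set k : ℝ := (a + b) / (2 * a * b) with hk_def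
  have hk : 0 < k := by positivity
  set c : ℝ := (b * m + a * w) / (a + b) with hc_def
  have hexp : ∀ x : ℝ, rexp (- (x - m)^2 / (2 * a)) * rexp (- (x - w)^2 / (2 * b))
      = rexp (- (w - m)^2 / (2 * (a + b))) * rexp (-k * (x - c)^2) := by
    intro x
    rw [← Real.exp_add, ← Real.exp_add]
    congr 1
    rw [hk_def, hc_def]
    field_simp
    ring
  have hint : ∀ x : ℝ, (Real.sqrt (2 * π * a))⁻¹ * rexp (- (x - m)^2 / (2 * a)) *
        ((Real.sqrt (2 * π * b))⁻¹ * rexp (- (x - w)^2 / (2 * b)))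
      = ((Real.sqrt (2 * π * a))⁻¹ * (Real.sqrt (2 * π * b))⁻¹ *
          rexp (- (w - m)^2 / (2 * (a + b)))) * rexp (-k * (x - c)^2) := by
    intro x
    rw [mul_mul_mul_comm, hexp x]
    ring
  simp_rw [hint]
  rw [MeasureTheory.integral_const_mul]
  rw [integral_sub_right_eq_self (fun x => rexp (-k * x ^ 2)) c]
  rw [integral_gaussian k]
  have hconst : (Real.sqrt (2 * π * a))⁻¹ * (Real.sqrt (2 * π * b))⁻¹ * Real.sqrt (π / k)
      = (Real.sqrt (2 * π * (a + b)))⁻¹ := by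
    rw [← Real.sqrt_inv, ← Real.sqrt_inv, ← Real.sqrt_inv,
      ← Real.sqrt_mul (by positivity), ← Real.sqrt_mul (by positivity)]
    congr 1
    rw [hk_def]
    field_simp
  calc (Real.sqrt (2 * π * a))⁻¹ * (Real.sqrt (2 * π * b))⁻¹ *
          rexp (- (w - m)^2 / (2 * (a + b))) * Real.sqrt (π / k)
      = ((Real.sqrt (2 * π * a))⁻¹ * (Real.sqrt (2 * π * b))⁻¹ * Real.sqrt (π / k)) *
          rexp (- (w - m)^2 / (2 * (a + b))) := by ring
    _ = _ := by rw [hconst]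

lemma aux_pdfReal_conv (m₁ m₂ : ℝ) {v₁ v₂ : ℝ≥0} (h₁ : v₁ ≠ 0) (h₂ : v₂ ≠ 0) (z : ℝ) :
    ∫ x : ℝ, gaussianPDFReal m₁ v₁ x * gaussianPDFReal (z - m₂) v₂ x
      = gaussianPDFReal (m₁ + m₂) (v₁ + v₂) z := by
  have ha : 0 < (v₁ : ℝ) := lt_of_le_of_ne v₁.coe_nonneg (by exact_mod_cast h₁.symm)
  have hb : 0 < (v₂ : ℝ) := lt_of_le_of_ne v₂.coe_nonneg (by exact_mod_cast h₂.symm)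
  have h := aux_real_conv ha hb m₁ (z - m₂)
  simp only [gaussianPDFReal, NNReal.coe_add]
  rw [h]
  congr 2
  ring

lemma aux_pdfReal_comm (m x z : ℝ) (v : ℝ≥0) :
    gaussianPDFReal (m + x) v z = gaussianPDFReal (z - m) v x := by
  simp only [gaussianPDFReal]
  congr 2
  ring

lemma aux_gaussian_conv (m₁ m₂ : ℝ) {v₁ v₂ : ℝ≥0} (h₁ : v₁ ≠ 0) (h₂ : v₂ ≠ 0) :
    Measure.conv (gaussianReal m₁ v₁) (gaussianReal m₂ v₂)
      = gaussianReal (m₁ + m₂) (v₁ + v₂) := by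
  have h₁₂ : v₁ + v₂ ≠ 0 := by simp [h₁]
  ext s hs
  rw [Measure.conv, Measure.map_apply measurable_add hs,
    Measure.prod_apply (measurable_add hs)]
  have step2 : ∀ x : ℝ, gaussianReal m₂ v₂ (Prod.mk x ⁻¹' ((fun p : ℝ × ℝ => p.1 + p.2) ⁻¹' s))
      = ∫⁻ z in s, gaussianPDF (m₂ + x) v₂ z := by
    intro x
    have : (Prod.mk x ⁻¹' ((fun p : ℝ × ℝ => p.1 + p.2) ⁻¹' s)) = (fun y => x + y) ⁻¹' s := rfl
    rw [this, ← Measure.map_apply (measurable_const_add x) hs, gaussianReal_map_const_add,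
      gaussianReal_apply _ h₂]
  simp_rw [step2]
  have hjm : Measurable (Function.uncurry fun x z : ℝ => gaussianPDF (m₂ + x) v₂ z) := by
    apply Measurable.ennreal_ofReal
    unfold gaussianPDFReal
    fun_prop
  rw [gaussianReal_of_var_ne_zero _ h₁,
    lintegral_withDensity_eq_lintegral_mul volume (measurable_gaussianPDF m₁ v₁)
      (Measurable.lintegral_prod_right (ν := volume.restrict s) hjm)]
  simp only [Pi.mul_apply]
  have step3 : ∀ x : ℝ, gaussianPDF m₁ v₁ x * ∫⁻ z in s, gaussianPDF (m₂ + x) v₂ z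
      = ∫⁻ z in s, gaussianPDF m₁ v₁ x * gaussianPDF (m₂ + x) v₂ z := by
    intro x
    rw [lintegral_const_mul' (gaussianPDF m₁ v₁ x) _ (ENNReal.ofReal_ne_top)]
  simp_rw [step3]
  rw [lintegral_lintegral_swap
    (((measurable_gaussianPDF m₁ v₁).comp measurable_fst).mul hjm).aemeasurable]
  have step4 : ∀ z : ℝ, ∫⁻ x, gaussianPDF m₁ v₁ x * gaussianPDF (m₂ + x) v₂ z
      = gaussianPDF (m₁ + m₂) (v₁ + v₂) z := by
    intro z
    have heq : ∀ x : ℝ, gaussianPDF m₁ v₁ x * gaussianPDF (m₂ + x) v₂ z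
        = ENNReal.ofReal (gaussianPDFReal m₁ v₁ x * gaussianPDFReal (z - m₂) v₂ x) := by
      intro x
      rw [gaussianPDF, gaussianPDF, aux_pdfReal_comm,
        ENNReal.ofReal_mul (gaussianPDFReal_nonneg _ _ _)]
    simp_rw [heq]
    have hInt : Integrable (fun x => gaussianPDFReal m₁ v₁ x * gaussianPDFReal (z - m₂) v₂ x) :=
      Integrable.bdd_mul (integrable_gaussianPDFReal (z - m₂) v₂)
        (stronglyMeasurable_gaussianPDFReal m₁ v₁).aestronglyMeasurable
        (ae_of_all _ (aux_pdf_bound m₁ v₁))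
    rw [← ofReal_integral_eq_lintegral_ofReal hInt
      (ae_of_all _ fun x => mul_nonneg (gaussianPDFReal_nonneg _ _ _)
        (gaussianPDFReal_nonneg _ _ _)),
      aux_pdfReal_conv m₁ m₂ h₁ h₂ z]
    rfl
  simp_rw [step4]
  rw [← gaussianReal_apply _ h₁₂ s]


/-- One step of the forward diffusion kernel maps the Gaussian conditional marginal at
the previous timestep to the Gaussian conditional marginal at the current timestep:
the pushforward of `N(√ᾱ'·x₀, 1−ᾱ')` under `y ↦ √α·y`, convolved with `N(0, β)`,
equals `N(√ᾱ·x₀, 1−ᾱ)`.  In particular the schedule identity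
`α·(1−ᾱ') + β = 1−ᾱ` holds. -/
theorem forward_diffusion_step_gaussian_marginal
    (β αbar' : ℝ) (hβ : β ∈ Set.Ioo (0 : ℝ) 1) (hαbar' : αbar' ∈ Set.Ioo (0 : ℝ) 1)
    (α : ℝ) (hα : α = 1 - β) (αbar : ℝ) (hαbar : αbar = α * αbar') (x₀ : ℝ) :
    Measure.conv
        (Measure.map (fun y : ℝ => Real.sqrt α * y)
          (gaussianReal (Real.sqrt αbar' * x₀) (1 - αbar').toNNReal))
        (gaussianReal 0 β.toNNReal)
      = gaussianReal (Real.sqrt αbar * x₀) (1 - αbar).toNNReal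
    ∧ α * (1 - αbar') + β = 1 - αbar := by
  obtain ⟨hβ0, hβ1⟩ := hβ
  obtain ⟨ha0, ha1⟩ := hαbar'
  have hα0 : 0 < α := by rw [hα]; linarith
  have hα1 : α < 1 := by rw [hα]; linarith
  have hαb0 : 0 < αbar := by rw [hαbar]; positivity
  have hαb1 : αbar < 1 := by
    rw [hαbar]
    nlinarith
  have hid : α * (1 - αbar') + β = 1 - αbar := by rw [hα, hαbar, hα]; ring
  refine ⟨?_, hid⟩
  have hmap : Measure.map (fun y : ℝ => Real.sqrt α * y)
        (gaussianReal (Real.sqrt αbar' * x₀) (1 - αbar').toNNReal)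
      = gaussianReal (Real.sqrt αbar * x₀)
          (⟨Real.sqrt α ^ 2, sq_nonneg _⟩ * (1 - αbar').toNNReal) := by
    have := gaussianReal_map_const_mul (μ := Real.sqrt αbar' * x₀)
      (v := (1 - αbar').toNNReal) (Real.sqrt α)
    rw [show (fun y : ℝ => Real.sqrt α * y) = (Real.sqrt α * ·) from rfl, this]
    congr 1
    rw [← mul_assoc, ← Real.sqrt_mul hα0.le, ← hαbar]
  rw [hmap, aux_gaussian_conv _ _ ?hv1 ?hv2]
  case hv1 =>
    simp only [ne_eq, mul_eq_zero, not_or]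
    refine mul_ne_zero ?_ ?_
    · intro h
      have : Real.sqrt α ^ 2 = 0 := congrArg NNReal.toReal h
      rw [Real.sq_sqrt hα0.le] at this
      exact hα0.ne' this
    · simp only [ne_eq, Real.toNNReal_eq_zero, not_le]
      linarith
  case hv2 => simp only [ne_eq, Real.toNNReal_eq_zero, not_le]; linarith
  rw [add_zero]
  congr 1
  ext : 1
  show Real.sqrt α ^ 2 * ((1 - αbar').toNNReal : ℝ) + (β.toNNReal : ℝ) = ((1 - αbar).toNNReal : ℝ)
  push_cast
  rw [Real.sq_sqrt hα0.le, Real.coe_toNNReal _ (by linarith), Real.coe_toNNReal _ (by linarith),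
    Real.coe_toNNReal _ (by linarith)]
  linarith [hid]
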